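/- Let R be a commutative ring and let G ∈ R⟦t,s⟧ be a formal power series in two variables such that every monomial t^i s^j occurring in G satisfies j ≥ 1 and i + j ≥ 2 (i.e., G lies in the ideal generated by t·s and s²). Then there exists a unique formal power series φ ∈ R⟦t⟧ such that φ = t² + G(t, φ) (equivalently, F(t, φ(t)) = 0 where F(t,s) = s − t² − G(t,s)); moreover this φ satisfies φ ∈ t²·R⟦t⟧, with leading term t². -/

import Mathlib

/-- Substitution of `φ ∈ R⟦t⟧` for the (outer) variable `s` in
`G ∈ R⟦t⟧⟦s⟧`, i.e. `G(t, φ) = Σ_j (coeff_s j G) · φ^j`.  For `φ` with zero constant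
term this sum is coefficientwise finite: the `n`-th `t`-coefficient only receives
contributions from `j ≤ n`. -/
noncomputable def substS {R : Type*} [CommRing R]
    (G : PowerSeries (PowerSeries R)) (φ : PowerSeries R) : PowerSeries R :=
  PowerSeries.mk fun n => ∑ j ∈ Finset.range (n + 1),
    PowerSeries.coeff n (PowerSeries.coeff j G * φ ^ j)

open PowerSeries Finset

private lemma powZero' {R : Type*} [CommRing R] (φ : PowerSeries R)
    (hφ : constantCoeff φ = 0) (j b : ℕ) (hb : b < j) :
    coeff b (φ ^ j) = 0 := by
  have hd : (X : PowerSeries R) ^ j ∣ φ ^ j :=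
    pow_dvd_pow_of_dvd (X_dvd_iff.mpr hφ) j
  exact (X_pow_dvd_iff.mp hd) b hb

private lemma powEq' {R : Type*} [CommRing R] (φ ψ : PowerSeries R)
    (hφ : constantCoeff φ = 0) (hψ : constantCoeff ψ = 0) :
    ∀ j m : ℕ, (∀ k : ℕ, k + j ≤ m + 1 → coeff k φ = coeff k ψ) →
      coeff m (φ ^ j) = coeff m (ψ ^ j) := by
  intro j
  induction j with
  | zero => intro m _; rfl
  | succ j ih =>
    intro m h
    rw [pow_succ', pow_succ', coeff_mul, coeff_mul]
    apply Finset.sum_congr rfl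
    rintro ⟨a, b⟩ hp
    have hab : a + b = m := Finset.HasAntidiagonal.mem_antidiagonal.mp hp
    rcases Nat.eq_zero_or_pos a with ha | ha
    · subst ha
      rw [coeff_zero_eq_constantCoeff, hφ, hψ, zero_mul, zero_mul]
    · rcases lt_or_ge b j with hb | hb
      · rw [powZero' φ hφ j b hb, powZero' ψ hψ j b hb, mul_zero, mul_zero]
      · have h1 : coeff a φ = coeff a ψ := h a (by omega)
        have h2 : coeff b (φ ^ j) = coeff b (ψ ^ j) := by
          apply ih
          intro k hk
          exact h k (by omega)
        rw [h1, h2]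

private lemma substSEq {R : Type*} [CommRing R] (G : PowerSeries (PowerSeries R))
    (hG : ∀ i j : ℕ,
      PowerSeries.coeff i (PowerSeries.coeff j G) ≠ 0 →
        1 ≤ j ∧ 2 ≤ i + j)
    (φ ψ : PowerSeries R) (hφ : constantCoeff φ = 0) (hψ : constantCoeff ψ = 0)
    (n : ℕ) (h : ∀ m < n, coeff m φ = coeff m ψ) :
    coeff n (substS G φ) = coeff n (substS G ψ) := by
  simp only [substS, coeff_mk]
  apply Finset.sum_congr rfl
  intro j _
  rw [coeff_mul, coeff_mul]
  apply Finset.sum_congr rfl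
  rintro ⟨a, b⟩ hp
  have hab : a + b = n := Finset.HasAntidiagonal.mem_antidiagonal.mp hp
  by_cases hz : coeff a (PowerSeries.coeff j G) = 0
  · rw [hz, zero_mul, zero_mul]
  · obtain ⟨hj1, hij⟩ := hG a j hz
    congr 1
    apply powEq' φ ψ hφ hψ j b
    intro k hk
    exact h k (by omega)

private lemma substSZero {R : Type*} [CommRing R] (G : PowerSeries (PowerSeries R))
    (hG : ∀ i j : ℕ,
      PowerSeries.coeff i (PowerSeries.coeff j G) ≠ 0 →
        1 ≤ j ∧ 2 ≤ i + j)
    (φ : PowerSeries R) : constantCoeff (substS G φ) = 0 := by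
  rw [← coeff_zero_eq_constantCoeff]
  simp only [substS, coeff_mk]
  rw [Finset.sum_range_one, pow_zero, mul_one]
  by_contra hz
  exact absurd (hG 0 0 hz).1 (by omega)

/-- Let `G ∈ R⟦t, s⟧` (encoded as `R⟦t⟧⟦s⟧`) be such that every monomial `t^i s^j`
occurring in `G` has `j ≥ 1` and `i + j ≥ 2`.  Then there is a unique power series
`φ ∈ R⟦t⟧` (with zero constant term, as required for the substitution `G(t, φ)` to be
defined) such that `φ = t² + G(t, φ)`; moreover any such `φ` lies in `t²·R⟦t⟧` with
leading term `t²`. -/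
theorem stmt14 (R : Type*) [CommRing R] (G : PowerSeries (PowerSeries R))
    (hG : ∀ i j : ℕ,
      PowerSeries.coeff i (PowerSeries.coeff j G) ≠ 0 →
        1 ≤ j ∧ 2 ≤ i + j) :
    (∃! φ : PowerSeries R,
      PowerSeries.constantCoeff φ = 0 ∧ φ = PowerSeries.X ^ 2 + substS G φ) ∧
    (∀ φ : PowerSeries R,
      PowerSeries.constantCoeff φ = 0 → φ = PowerSeries.X ^ 2 + substS G φ →
        PowerSeries.coeff 0 φ = 0 ∧ PowerSeries.coeff 1 φ = 0 ∧
          PowerSeries.coeff 2 φ = 1) := by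
  set f : PowerSeries R → PowerSeries R := fun ψ => X ^ 2 + substS G ψ with hf
  have hf0 : ∀ ψ, constantCoeff (f ψ) = 0 := by
    intro ψ
    simp [hf, substSZero G hG ψ, pow_two]
  have hfcoeff : ∀ ψ n, coeff n (f ψ) = coeff n (X ^ 2 : PowerSeries R) + coeff n (substS G ψ) := by
    intro ψ n; simp [hf]
  have hfEq : ∀ (φ ψ : PowerSeries R), constantCoeff φ = 0 → constantCoeff ψ = 0 →
      ∀ n, (∀ m < n, coeff m φ = coeff m ψ) → coeff n (f φ) = coeff n (f ψ) := by
    intro φ ψ hφ hψ n h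
    rw [hfcoeff, hfcoeff, substSEq G hG φ ψ hφ hψ n h]
  have hiter0 : ∀ k, constantCoeff (f^[k] (0 : PowerSeries R)) = 0 := by
    intro k
    cases k with
    | zero => simp
    | succ k => rw [Function.iterate_succ_apply']; exact hf0 _
  have key : ∀ n k l : ℕ, n < k → n < l →
      coeff n (f^[k] 0) = coeff n (f^[l] 0) := by
    intro n
    induction n using Nat.strong_induction_on with
    | _ n ih =>
      intro k l hk hl
      obtain ⟨k, rfl⟩ := Nat.exists_eq_succ_of_ne_zero (by omega : k ≠ 0)
      obtain ⟨l, rfl⟩ := Nat.exists_eq_succ_of_ne_zero (by omega : l ≠ 0)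
      rw [Function.iterate_succ_apply', Function.iterate_succ_apply']
      apply hfEq _ _ (hiter0 k) (hiter0 l)
      intro m hm
      exact ih m hm k l (by omega) (by omega)
  set φ : PowerSeries R := PowerSeries.mk fun n => coeff n (f^[n + 1] 0) with hφdef
  have hφk : ∀ n k, n < k → coeff n φ = coeff n (f^[k] 0) := by
    intro n k hk
    rw [hφdef, coeff_mk]
    exact key n (n + 1) k (Nat.lt_succ_self n) hk
  have hφ0 : constantCoeff φ = 0 := by
    rw [← coeff_zero_eq_constantCoeff, hφk 0 1 Nat.one_pos]
    simpa using hiter0 1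
  have hfix : φ = f φ := by
    ext n
    rw [hφk n (n + 2) (by omega), Function.iterate_succ_apply']
    apply hfEq _ _ (hiter0 (n + 1)) hφ0
    intro m hm
    exact (hφk m (n + 1) (by omega)).symm
  have huniq : ∀ ψ : PowerSeries R, constantCoeff ψ = 0 → ψ = f ψ → ψ = φ := by
    intro ψ hψ0 hψfix
    ext n
    induction n using Nat.strong_induction_on with
    | _ n ih =>
      calc coeff n ψ = coeff n (f ψ) := by rw [← hψfix]
        _ = coeff n (f φ) := hfEq ψ φ hψ0 hφ0 n ih
        _ = coeff n φ := by rw [← hfix]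
  -- auxiliary coefficient facts about G
  have hG0 : ∀ i, coeff i (PowerSeries.coeff 0 G) = 0 := by
    intro i
    by_contra hz
    exact absurd (hG i 0 hz).1 (by omega)
  have hG0' : ∀ i, coeff i ((PowerSeries.constantCoeff) G) = 0 := by
    intro i
    have := hG0 i
    rwa [PowerSeries.coeff_zero_eq_constantCoeff] at this
  have hG10 : coeff 0 (PowerSeries.coeff 1 G) = 0 := by
    by_contra hz
    exact absurd (hG 0 1 hz).2 (by omega)
  have hmore : ∀ ψ : PowerSeries R,
      PowerSeries.constantCoeff ψ = 0 → ψ = PowerSeries.X ^ 2 + substS G ψ →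
        PowerSeries.coeff 0 ψ = 0 ∧ PowerSeries.coeff 1 ψ = 0 ∧
          PowerSeries.coeff 2 ψ = 1 := by
    intro ψ hψ0 hψfix
    have c0 : coeff 0 ψ = 0 := by rw [coeff_zero_eq_constantCoeff]; exact hψ0
    have c1 : coeff 1 ψ = 0 := by
      conv_lhs => rw [hψfix]
      rw [map_add, coeff_X_pow]
      simp only [substS, coeff_mk]
      rw [Finset.sum_range_succ, Finset.sum_range_one, pow_zero, mul_one, pow_one]
      rw [coeff_mul, Finset.Nat.sum_antidiagonal_eq_sum_range_succ_mk]
      rw [Finset.sum_range_succ, Finset.sum_range_one]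
      simp [hG0, hG0', hG10, c0]
    have c2 : coeff 2 ψ = 1 := by
      conv_lhs => rw [hψfix]
      rw [map_add, coeff_X_pow]
      simp only [substS, coeff_mk]
      rw [Finset.sum_range_succ, Finset.sum_range_succ, Finset.sum_range_one,
        pow_zero, mul_one, pow_one]
      have e1 : coeff 2 (PowerSeries.coeff 1 G * ψ) = 0 := by
        rw [coeff_mul, Finset.Nat.sum_antidiagonal_eq_sum_range_succ_mk]
        rw [Finset.sum_range_succ, Finset.sum_range_succ, Finset.sum_range_one]
        simp [hG10, c1, c0]
      have e2 : coeff 2 (PowerSeries.coeff 2 G * ψ ^ 2) = 0 := by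
        rw [coeff_mul, Finset.Nat.sum_antidiagonal_eq_sum_range_succ_mk]
        rw [Finset.sum_range_succ, Finset.sum_range_succ, Finset.sum_range_one]
        have p0 : coeff 0 (ψ ^ 2) = 0 := powZero' ψ hψ0 2 0 (by omega)
        have p1 : coeff 1 (ψ ^ 2) = 0 := powZero' ψ hψ0 2 1 (by omega)
        have p2 : coeff 2 (ψ ^ 2) = 0 := by
          rw [pow_two, coeff_mul, Finset.Nat.sum_antidiagonal_eq_sum_range_succ_mk]
          rw [Finset.sum_range_succ, Finset.sum_range_succ, Finset.sum_range_one]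
          simp [c0, c1]
        simp [p0, p1, p2]
      simp [hG0, hG0', e1, e2]
    exact ⟨c0, c1, c2⟩
  constructor
  · exact ⟨φ, ⟨hφ0, hfix⟩, fun ψ h => huniq ψ h.1 h.2⟩
  · exact hmore
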